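/- For every finite simple graph G, c₂(G) ≤ 2·τ(G), where τ(G) is the vertex cover number of G. -/

import Mathlib

open Matrix

/-- A subgraph complementation system for `G`: a finite collection (multiset) of subsets of
vertices such that two distinct vertices are adjacent iff they lie together in an odd
number of the sets. -/
def IsSCS {V : Type*} [DecidableEq V] (G : SimpleGraph V) (𝒞 : Multiset (Finset V)) : Prop :=
  ∀ u v : V, u ≠ v →
    (G.Adj u v ↔ Odd (Multiset.card (𝒞.filter (fun C => u ∈ C ∧ v ∈ C))))

/-- The subgraph complementation number `c₂(G)`: the minimum cardinality of a subgraph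
complementation system for `G`. -/
noncomputable def c2 {V : Type*} [DecidableEq V] (G : SimpleGraph V) : ℕ :=
  sInf {k | ∃ 𝒞 : Multiset (Finset V), IsSCS G 𝒞 ∧ Multiset.card 𝒞 = k}

/-- A symmetric matrix over `F₂` fits `G` if its off-diagonal entries record adjacency. -/
def FitsF2 {V : Type*} (G : SimpleGraph V) (A : Matrix V V (ZMod 2)) : Prop :=
  A.IsSymm ∧ ∀ u v : V, u ≠ v → (A u v = 1 ↔ G.Adj u v)

/-- The minimum rank of `G` over `F₂`: the minimum rank of a symmetric matrix over `F₂`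
that fits `G`. -/
noncomputable def mrF2 {V : Type*} [Fintype V] (G : SimpleGraph V) : ℕ :=
  sInf {k | ∃ A : Matrix V V (ZMod 2), FitsF2 G A ∧ A.rank = k}

/-- The vertex cover number `τ(G)`: the minimum cardinality of a set of vertices meeting
every edge of `G`. -/
noncomputable def vertexCoverNumber {V : Type*} [Fintype V] [DecidableEq V]
    (G : SimpleGraph V) : ℕ :=
  sInf {k | ∃ S : Finset V, (∀ u v : V, G.Adj u v → u ∈ S ∨ v ∈ S) ∧ S.card = k}

theorem stmt4 {V : Type*} [Fintype V] [DecidableEq V] (G : SimpleGraph V) :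
    c2 G ≤ 2 * vertexCoverNumber G := by
  classical
  obtain ⟨S, hS, hScard⟩ : vertexCoverNumber G ∈
      {k | ∃ S : Finset V, (∀ u v : V, G.Adj u v → u ∈ S ∨ v ∈ S) ∧ S.card = k} :=
    Nat.sInf_mem ⟨(Finset.univ : Finset V).card, Finset.univ,
      fun u v _ => Or.inl (Finset.mem_univ u), rfl⟩
  set ord : V → ℕ := fun v => ((Fintype.equivFin V) v : ℕ) with hord
  have hordinj : Function.Injective ord := fun a b h =>
    (Fintype.equivFin V).injective (Fin.val_injective h)
  set N : V → Finset V := fun x =>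
    (G.neighborFinset x).filter (fun y => ¬(y ∈ S ∧ ord y < ord x)) with hNdef
  have hmemN : ∀ x y, y ∈ N x ↔ G.Adj x y ∧ ¬(y ∈ S ∧ ord y < ord x) := by
    intro x y; simp [hNdef, SimpleGraph.mem_neighborFinset]
  have hxN : ∀ x, x ∉ N x := fun x hx => G.loopless.irrefl x ((hmemN x x).1 hx).1
  set 𝒞 : Multiset (Finset V) :=
    S.val.map N + S.val.map (fun x => insert x (N x)) with hCdef
  have hcard : Multiset.card 𝒞 = 2 * S.card := by
    rw [hCdef, Multiset.card_add, Multiset.card_map, Multiset.card_map]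
    show S.card + S.card = 2 * S.card
    ring
  have hSCS : IsSCS G 𝒞 := by
    intro u v huv
    set T : ℕ := ∑ x ∈ S, (if u ∈ N x ∧ v ∈ N x then 1 else 0) with hT
    have hsum : Multiset.card (𝒞.filter (fun C => u ∈ C ∧ v ∈ C))
        = T + ∑ x ∈ S, (if u ∈ insert x (N x) ∧ v ∈ insert x (N x) then 1 else 0) := by
      rw [← Multiset.countP_eq_card_filter, hCdef, Multiset.countP_add,
        Multiset.countP_map, Multiset.countP_map]
      congr 1
      · rw [hT]
        show (Finset.filter _ S).card = _
        rw [Finset.card_filter]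
      · show (Finset.filter _ S).card = _
        rw [Finset.card_filter]
    have hpoint : ∀ x ∈ S,
        (if u ∈ N x ∧ v ∈ N x then (1:ℕ) else 0)
          + (if u ∈ insert x (N x) ∧ v ∈ insert x (N x) then 1 else 0)
        = 2 * (if u ∈ N x ∧ v ∈ N x then 1 else 0)
          + ((if x = u ∧ v ∈ N x then 1 else 0) + (if x = v ∧ u ∈ N x then 1 else 0)) := by
      intro x _
      by_cases hA : u ∈ N x ∧ v ∈ N x
      · have hxu : ¬ (x = u ∧ v ∈ N x) := fun h => hxN x (h.1 ▸ hA.1)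
        have hxv : ¬ (x = v ∧ u ∈ N x) := fun h => hxN x (h.1 ▸ hA.2)
        have hB : u ∈ insert x (N x) ∧ v ∈ insert x (N x) :=
          ⟨Finset.mem_insert_of_mem hA.1, Finset.mem_insert_of_mem hA.2⟩
        rw [if_pos hA, if_pos hB, if_neg hxu, if_neg hxv]
      · by_cases hCu : x = u ∧ v ∈ N x
        · have hnB : ¬ (x = v ∧ u ∈ N x) := fun h => huv (hCu.1 ▸ h.1 ▸ rfl)
          have hB : u ∈ insert x (N x) ∧ v ∈ insert x (N x) :=
            ⟨hCu.1 ▸ Finset.mem_insert_self x _, Finset.mem_insert_of_mem hCu.2⟩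
          rw [if_neg hA, if_pos hB, if_pos hCu, if_neg hnB]
        · by_cases hCv : x = v ∧ u ∈ N x
          · have hB : u ∈ insert x (N x) ∧ v ∈ insert x (N x) :=
              ⟨Finset.mem_insert_of_mem hCv.2, hCv.1 ▸ Finset.mem_insert_self x _⟩
            rw [if_neg hA, if_pos hB, if_neg hCu, if_pos hCv]
          · have hnB : ¬ (u ∈ insert x (N x) ∧ v ∈ insert x (N x)) := by
              simp only [Finset.mem_insert]
              rintro ⟨hu | hu, hv | hv⟩
              · exact huv (hu ▸ hv ▸ rfl)
              · exact hCu ⟨hu.symm, hv⟩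
              · exact hCv ⟨hv.symm, hu⟩
              · exact hA ⟨hu, hv⟩
            rw [if_neg hA, if_neg hnB, if_neg hCu, if_neg hCv]
    have hifu : ∑ x ∈ S, (if x = u ∧ v ∈ N x then (1:ℕ) else 0)
        = if u ∈ S ∧ v ∈ N u then 1 else 0 := by
      have heq : ∀ x, (if x = u ∧ v ∈ N x then (1:ℕ) else 0)
          = if x = u then (if v ∈ N u then (1:ℕ) else 0) else 0 := by
        intro x
        by_cases hx : x = u
        · subst hx
          by_cases hv : v ∈ N x
          · rw [if_pos ⟨rfl, hv⟩, if_pos rfl, if_pos hv]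
          · rw [if_neg (fun h => hv h.2), if_pos rfl, if_neg hv]
        · rw [if_neg (fun h => hx h.1), if_neg hx]
      rw [Finset.sum_congr rfl (fun x _ => heq x),
        Finset.sum_ite_eq' S u (fun _ => if v ∈ N u then (1:ℕ) else 0)]
      by_cases hu : u ∈ S
      · rw [if_pos hu]
        by_cases hv : v ∈ N u
        · rw [if_pos hv, if_pos ⟨hu, hv⟩]
        · rw [if_neg hv, if_neg (fun h => hv h.2)]
      · rw [if_neg hu, if_neg (fun h => hu h.1)]
    have hifv : ∑ x ∈ S, (if x = v ∧ u ∈ N x then (1:ℕ) else 0)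
        = if v ∈ S ∧ u ∈ N v then 1 else 0 := by
      have heq : ∀ x, (if x = v ∧ u ∈ N x then (1:ℕ) else 0)
          = if x = v then (if u ∈ N v then (1:ℕ) else 0) else 0 := by
        intro x
        by_cases hx : x = v
        · subst hx
          by_cases hv : u ∈ N x
          · rw [if_pos ⟨rfl, hv⟩, if_pos rfl, if_pos hv]
          · rw [if_neg (fun h => hv h.2), if_pos rfl, if_neg hv]
        · rw [if_neg (fun h => hx h.1), if_neg hx]
      rw [Finset.sum_congr rfl (fun x _ => heq x),
        Finset.sum_ite_eq' S v (fun _ => if u ∈ N v then (1:ℕ) else 0)]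
      by_cases hu : v ∈ S
      · rw [if_pos hu]
        by_cases hv : u ∈ N v
        · rw [if_pos hv, if_pos ⟨hu, hv⟩]
        · rw [if_neg hv, if_neg (fun h => hv h.2)]
      · rw [if_neg hu, if_neg (fun h => hu h.1)]
    have hkey : Multiset.card (𝒞.filter (fun C => u ∈ C ∧ v ∈ C))
        = 2 * T + ((if u ∈ S ∧ v ∈ N u then 1 else 0) + (if v ∈ S ∧ u ∈ N v then 1 else 0)) := by
      rw [hsum, ← hifu, ← hifv, hT, ← Finset.sum_add_distrib, Finset.mul_sum,
        ← Finset.sum_add_distrib, ← Finset.sum_add_distrib]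
      exact Finset.sum_congr rfl hpoint
    rw [hkey]
    have hnotboth : ¬((u ∈ S ∧ v ∈ N u) ∧ (v ∈ S ∧ u ∈ N v)) := by
      rintro ⟨⟨huS, hvN⟩, hvS, huN⟩
      have h1 := ((hmemN u v).1 hvN).2
      have h2 := ((hmemN v u).1 huN).2
      have hne : ord u ≠ ord v := fun h => huv (hordinj h)
      rcases lt_or_gt_of_ne hne with h | h
      · exact h2 ⟨huS, h⟩
      · exact h1 ⟨hvS, h⟩
    constructor
    · intro hadj
      have hor : (u ∈ S ∧ v ∈ N u) ∨ (v ∈ S ∧ u ∈ N v) := by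
        rcases hS u v hadj with huS | hvS
        · by_cases hvlt : v ∈ S ∧ ord v < ord u
          · obtain ⟨hvS, hlt⟩ := hvlt
            exact Or.inr ⟨hvS, (hmemN v u).2 ⟨hadj.symm, by rintro ⟨_, h'⟩; omega⟩⟩
          · exact Or.inl ⟨huS, (hmemN u v).2 ⟨hadj, hvlt⟩⟩
        · by_cases hult : u ∈ S ∧ ord u < ord v
          · obtain ⟨huS, hlt⟩ := hult
            exact Or.inl ⟨huS, (hmemN u v).2 ⟨hadj, by rintro ⟨_, h'⟩; omega⟩⟩
          · exact Or.inr ⟨hvS, (hmemN v u).2 ⟨hadj.symm, hult⟩⟩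
      have hone : (if u ∈ S ∧ v ∈ N u then (1:ℕ) else 0)
          + (if v ∈ S ∧ u ∈ N v then 1 else 0) = 1 := by
        rcases hor with h | h
        · rw [if_pos h, if_neg (fun h2 => hnotboth ⟨h, h2⟩)]
        · rw [if_neg (fun h1 => hnotboth ⟨h1, h⟩), if_pos h]
      rw [hone]
      exact ⟨T, by ring⟩
    · intro hodd
      by_contra hadj
      have h1 : ¬(u ∈ S ∧ v ∈ N u) := fun h => hadj ((hmemN u v).1 h.2).1
      have h2 : ¬(v ∈ S ∧ u ∈ N v) := fun h => hadj (((hmemN v u).1 h.2).1).symm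
      rw [if_neg h1, if_neg h2] at hodd
      obtain ⟨m, hm⟩ := hodd
      omega
  have hle : c2 G ≤ Multiset.card 𝒞 := Nat.sInf_le ⟨𝒞, hSCS, rfl⟩
  rw [hcard, hScard] at hle
  exact hle
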